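/- Let G be a group containing elements u₁,…,u₈, v₁,…,v₈ such that: (a) elements with distinct indices commute, i.e., uᵢ commutes with uⱼ and vⱼ, and vᵢ commutes with vⱼ, whenever i ≠ j; (b) uᵢ² = uⱼ², vᵢ² = vⱼ², and [uᵢ,vᵢ] = [uⱼ,vⱼ] for all i,j. Then the common commutator c = [u₁,v₁] satisfies c² = 1 and c is central in the subgroup generated by all uᵢ, vᵢ. -/

import Mathlib

open scoped commutatorElement

theorem stmt_12 {G : Type*} [Group G] (u v : Fin 8 → G)
    (hcomm : ∀ i j, i ≠ j →
      Commute (u i) (u j) ∧ Commute (u i) (v j) ∧ Commute (v i) (v j))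
    (hu2 : ∀ i j, (u i) ^ 2 = (u j) ^ 2)
    (hv2 : ∀ i j, (v i) ^ 2 = (v j) ^ 2)
    (hc : ∀ i j, ⁅u i, v i⁆ = ⁅u j, v j⁆) :
    ⁅u 0, v 0⁆ ^ 2 = 1 ∧
    ∀ g ∈ Subgroup.closure (Set.range u ∪ Set.range v), Commute ⁅u 0, v 0⁆ g := by
  have aux : ∀ a x y : G, Commute a x → Commute a y → Commute a ⁅x, y⁆ := by
    intro a x y hx hy
    rw [commutatorElement_def]
    exact ((hx.mul_right hy).mul_right hx.inv_right).mul_right hy.inv_right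
  have hcu : ∀ j, Commute ⁅u 0, v 0⁆ (u j) := by
    intro j
    by_cases h : j = (0 : Fin 8)
    · subst h
      rw [hc 0 1]
      exact (aux (u 0) _ _ (hcomm 0 1 (by decide)).1 (hcomm 0 1 (by decide)).2.1).symm
    · exact (aux _ _ _ (hcomm j 0 h).1 (hcomm j 0 h).2.1).symm
  have hcv : ∀ j, Commute ⁅u 0, v 0⁆ (v j) := by
    intro j
    by_cases h : j = (0 : Fin 8)
    · subst h
      rw [hc 0 1]
      exact (aux (v 0) _ _ ((hcomm 1 0 (by decide)).2.1).symm (hcomm 0 1 (by decide)).2.2).symm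
    · exact (aux _ _ _ ((hcomm 0 j (fun e => h e.symm)).2.1).symm (hcomm j 0 h).2.2).symm
  have hsq : ⁅u 0, v 0⁆ ^ 2 = 1 := by
    have h1 : ⁅u 0, v 0⁆ * v 0 * ⁅u 0, v 0⁆ * v 0 = u 0 * (v 0 ^ 2) * (u 0)⁻¹ := by
      rw [commutatorElement_def, sq]; group
    have h2 : u 0 * (v 0 ^ 2) * (u 0)⁻¹ = v 0 ^ 2 := by
      rw [hv2 0 1]
      have := (hcomm 0 1 (by decide)).2.1
      rw [this.pow_right 2 |>.eq]
      group
    have h3 : ⁅u 0, v 0⁆ * v 0 * ⁅u 0, v 0⁆ * v 0 = v 0 * v 0 := by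
      rw [h1, h2]; rw [sq]
    have h4 : ⁅u 0, v 0⁆ * ⁅u 0, v 0⁆ * (v 0 * v 0) = v 0 * v 0 := by
      calc ⁅u 0, v 0⁆ * ⁅u 0, v 0⁆ * (v 0 * v 0)
          = ⁅u 0, v 0⁆ * (⁅u 0, v 0⁆ * v 0) * v 0 := by group
        _ = ⁅u 0, v 0⁆ * (v 0 * ⁅u 0, v 0⁆) * v 0 := by rw [(hcv 0).eq]
        _ = ⁅u 0, v 0⁆ * v 0 * ⁅u 0, v 0⁆ * v 0 := by group
        _ = v 0 * v 0 := h3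
    have h5 : ⁅u 0, v 0⁆ * ⁅u 0, v 0⁆ * (v 0 * v 0) = 1 * (v 0 * v 0) := by
      rw [one_mul]; exact h4
    have := mul_right_cancel h5
    rwa [sq]
  refine ⟨hsq, ?_⟩
  intro g hg
  induction hg using Subgroup.closure_induction with
  | mem x hx =>
    rcases hx with ⟨i, rfl⟩ | ⟨i, rfl⟩
    · exact hcu i
    · exact hcv i
  | one => exact Commute.one_right _
  | mul x y _ _ hx hy => exact hx.mul_right hy
  | inv x _ hx => exact hx.inv_right
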